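/- Let C/C₁ be an extension of F-linear codes of length n with dim C/C₁ = 1, and let D₁/D be the corresponding dual extension (D = C^⊥, D₁ = C₁^⊥) with dim D₁/D = 1. Suppose there exist vectors a₁,…,a_w and b₁,…,b_w in F^n such that the coordinatewise product a_i ∗ b_j lies in D whenever i+j ≤ w, and a_i ∗ b_j lies in D₁ \ D whenever i+j = w+1. Then every codeword c ∈ C \ C₁ has Hamming weight at least w; that is, d(C/C₁) ≥ w. -/

import Mathlib

/-- The dual code of a linear code `C ⊆ F^n`, with respect to the standard
bilinear form `(x, c) ↦ ∑ i, x i * c i`. -/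
def dualCode {F : Type*} [Field F] {n : ℕ} (C : Submodule F (Fin n → F)) :
    Submodule F (Fin n → F) where
  carrier := {x | ∀ c ∈ C, ∑ i, x i * c i = 0}
  add_mem' := by
    intro a b ha hb c hc
    simp only [Pi.add_apply, add_mul, Finset.sum_add_distrib, ha c hc, hb c hc, add_zero]
  zero_mem' := by intro c hc; simp
  smul_mem' := by
    intro r a ha c hc
    simp only [Pi.smul_apply, smul_eq_mul, mul_assoc, ← Finset.mul_sum, ha c hc, mul_zero]

private lemma coset_bound_key {F : Type*} [Field F] {n : ℕ}
    (C C₁ : Submodule F (Fin n → F)) (hsub : C₁ ≤ C)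
    (hdimC : Module.finrank F C = Module.finrank F C₁ + 1)
    (c : Fin n → F) (hc : c ∈ C) (hc1 : c ∉ C₁)
    (x : Fin n → F) (hx1 : x ∈ dualCode C₁) (hx : x ∉ dualCode C) :
    ∑ i, x i * c i ≠ 0 := by
  intro h0
  apply hx
  have hle : C₁ ⊔ Submodule.span F {c} ≤ C := by
    rw [sup_le_iff]
    exact ⟨hsub, (Submodule.span_singleton_le_iff_mem c C).2 hc⟩
  have hlt : C₁ < C₁ ⊔ Submodule.span F {c} := by
    refine lt_of_le_of_ne le_sup_left ?_
    intro h
    exact hc1 (h ▸ (le_sup_right : Submodule.span F {c} ≤ _) (Submodule.mem_span_singleton_self c))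
  have heq : C₁ ⊔ Submodule.span F {c} = C := by
    apply Submodule.eq_of_le_of_finrank_le hle
    rw [hdimC]
    exact Submodule.finrank_lt_finrank_of_lt hlt
  intro c' hc'
  rw [← heq] at hc'
  obtain ⟨y, hy, z, hz, rfl⟩ := Submodule.mem_sup.1 hc'
  obtain ⟨t, rfl⟩ := Submodule.mem_span_singleton.1 hz
  simp only [Pi.add_apply, Pi.smul_apply, smul_eq_mul, mul_add]
  rw [Finset.sum_add_distrib, hx1 y hy, zero_add]
  simp only [mul_left_comm]
  rw [← Finset.mul_sum, h0, mul_zero]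

theorem coset_bound {F : Type*} [Field F] [Fintype F] [DecidableEq F] {n w : ℕ}
    (C C₁ : Submodule F (Fin n → F)) (hsub : C₁ ≤ C)
    (hdimC : Module.finrank F C = Module.finrank F C₁ + 1)
    (hdimD : Module.finrank F (dualCode C₁) = Module.finrank F (dualCode C) + 1)
    (a b : Fin w → (Fin n → F))
    (hD : ∀ i j : Fin w, ((i : ℕ) + 1) + ((j : ℕ) + 1) ≤ w →
      (fun k => a i k * b j k) ∈ dualCode C)
    (hD1 : ∀ i j : Fin w, ((i : ℕ) + 1) + ((j : ℕ) + 1) = w + 1 →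
      (fun k => a i k * b j k) ∈ dualCode C₁ ∧ (fun k => a i k * b j k) ∉ dualCode C) :
    ∀ c ∈ C, c ∉ C₁ → w ≤ hammingNorm c := by
  intro c hc hc1
  -- the matrix M i j = (a i ∗ b j) · c
  set M : Matrix (Fin w) (Fin w) F := fun i j => ∑ k, a i k * b j k * c k with hMdef
  -- entries above the antidiagonal vanish
  have hzeroM : ∀ i j : Fin w, (i : ℕ) + 1 + ((j : ℕ) + 1) ≤ w → M i j = 0 := by
    intro i j hij
    exact hD i j hij c hc
  -- antidiagonal entries are nonzero
  have hdiagM : ∀ i j : Fin w, (i : ℕ) + 1 + ((j : ℕ) + 1) = w + 1 → M i j ≠ 0 := by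
    intro i j hij
    obtain ⟨h1, h2⟩ := hD1 i j hij
    exact coset_bound_key C C₁ hsub hdimC c hc hc1 _ h1 h2
  -- the column-reversed matrix is lower triangular with nonzero diagonal
  set N : Matrix (Fin w) (Fin w) F := fun i j => M i (Fin.rev j) with hNdef
  have hNrank : N.rank = w := by
    have hdet : N.det ≠ 0 := by
      have htri : N.BlockTriangular OrderDual.toDual := by
        intro i j (h : (i : Fin w) < j)
        apply hzeroM
        have := j.isLt
        have := Fin.val_rev j
        omega
      rw [Matrix.det_of_lowerTriangular N htri]
      refine Finset.prod_ne_zero_iff.2 fun i _ => ?_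
      apply hdiagM
      have := i.isLt
      have := Fin.val_rev i
      omega
    have := Matrix.rank_of_isUnit N (by
      rwa [Matrix.isUnit_iff_isUnit_det, isUnit_iff_ne_zero])
    simpa using this
  have hMrank : M.rank = w := by
    have : M = N.submatrix (Equiv.refl (Fin w)) Fin.revPerm := by
      ext i j
      show M i j = M i (Fin.rev (Fin.revPerm j))
      simp [Fin.rev_rev]
    rw [this, Matrix.rank_submatrix]
    exact hNrank
  -- rank bound: M = A * (diagonal c * Bt)
  have hmid : (Matrix.of fun k j => c k * b j k) =
      Matrix.diagonal c * Matrix.of fun k j => b j k := by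
    ext k j
    rw [Matrix.diagonal_mul]
    rfl
  have hfact : M = (Matrix.of fun i k => a i k) *
      (Matrix.of fun k j => c k * b j k) := by
    ext i j
    simp only [hMdef, Matrix.mul_apply, Matrix.of_apply]
    apply Finset.sum_congr rfl
    intro k _
    ring
  have hle : M.rank ≤ hammingNorm c := by
    calc M.rank ≤ (Matrix.of fun k j => c k * b j k).rank := by
          rw [hfact]; exact Matrix.rank_mul_le_right _ _
      _ ≤ (Matrix.diagonal c).rank := by
          rw [hmid]; exact Matrix.rank_mul_le_left _ _
      _ = Fintype.card {k // c k ≠ 0} := Matrix.rank_diagonal c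
      _ = hammingNorm c := by simp [hammingNorm, Fintype.card_subtype]
  omega
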